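/- (ε,δ)-DP Le Cam matching: let M : X^n → Y be an (ε,δ)-differentially private mechanism and Ψ : Y → {1,2} a test function. Then for any two datasets X_1, X_2 ∈ X^n, (1/2)·(P(Ψ(M(X_1)) ≠ 1) + P(Ψ(M(X_2)) ≠ 2)) ≥ (1/2)·e^{−ε·⌈d_H(X_1,X_2)/2⌉} − e^{−ε}·δ·⌈d_H(X_1,X_2)/2⌉. -/

import Mathlib

open MeasureTheory ProbabilityTheory Real
open scoped ENNReal NNReal

variable {𝓧 𝓨 : Type*} [MeasurableSpace 𝓧] [MeasurableSpace 𝓨]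

/-- A randomized mechanism `M : 𝓧^n → 𝓨` (a Markov kernel) is `(ε, δ)`-differentially
private if for any two datasets at Hamming distance at most `1` and any measurable event `S`,
`P(M(x) ∈ S) ≤ e^ε P(M(y) ∈ S) + δ`. -/
def IsDP [DecidableEq 𝓧] {n : ℕ} (M : Kernel (Fin n → 𝓧) 𝓨) (ε δ : ℝ) : Prop :=
  ∀ x y : Fin n → 𝓧, hammingDist x y ≤ 1 →
    ∀ S : Set 𝓨, MeasurableSet S →
      M x S ≤ ENNReal.ofReal (Real.exp ε) * M y S + ENNReal.ofReal δ

lemma ham_step {ι α : Type*} [Fintype ι] [DecidableEq ι] [DecidableEq α]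
    (x y : ι → α) (hne : x ≠ y) :
    ∃ z : ι → α, hammingDist x z ≤ 1 ∧ hammingDist z y + 1 ≤ hammingDist x y := by
  obtain ⟨i, hi⟩ : ∃ i, x i ≠ y i := by
    by_contra h; push_neg at h; exact hne (funext h)
  refine ⟨Function.update x i (y i), ?_, ?_⟩
  · have hsub : ({j | x j ≠ Function.update x i (y i) j} : Finset ι) ⊆ {i} := by
      intro j hj
      simp only [Finset.mem_filter, Finset.mem_univ, true_and] at hj
      simp only [Finset.mem_singleton]
      by_contra hji
      exact hj (by rw [Function.update_of_ne hji])
    calc hammingDist x (Function.update x i (y i)) ≤ ({i} : Finset ι).card :=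
          Finset.card_le_card hsub
      _ = 1 := Finset.card_singleton i
  · have hmem : i ∈ ({j | x j ≠ y j} : Finset ι) := by
      simp [hi]
    have hsub : ({j | Function.update x i (y i) j ≠ y j} : Finset ι) ⊆
        ({j | x j ≠ y j} : Finset ι).erase i := by
      intro j hj
      simp only [Finset.mem_filter, Finset.mem_univ, true_and] at hj
      have hji : j ≠ i := by
        rintro rfl; exact hj (by simp)
      rw [Function.update_of_ne hji] at hj
      exact Finset.mem_erase.2 ⟨hji, by simp [hj]⟩
    have h1 : hammingDist (Function.update x i (y i)) y ≤
        (({j | x j ≠ y j} : Finset ι).erase i).card := Finset.card_le_card hsub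
    have h2 := Finset.card_erase_of_mem hmem
    have h3 : 1 ≤ ({j | x j ≠ y j} : Finset ι).card := Finset.card_pos.2 ⟨i, hmem⟩
    have h4 : hammingDist x y = ({j | x j ≠ y j} : Finset ι).card := rfl
    omega

lemma ham_split {ι α : Type*} [Fintype ι] [DecidableEq ι] [DecidableEq α] :
    ∀ (a b : ℕ) (x y : ι → α), hammingDist x y ≤ a + b →
      ∃ z, hammingDist x z ≤ a ∧ hammingDist z y ≤ b := by
  intro a
  induction a with
  | zero => exact fun b x y h => ⟨x, by simp, by simpa using h⟩
  | succ a ih =>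
    intro b x y h
    by_cases h' : hammingDist x y ≤ a + b
    · obtain ⟨z, hz1, hz2⟩ := ih b x y h'
      exact ⟨z, hz1.trans (Nat.le_succ a), hz2⟩
    · have hne : x ≠ y := by
        rintro rfl; simp [hammingDist_self] at h'
      obtain ⟨w, hw1, hw2⟩ := ham_step x y hne
      obtain ⟨z, hz1, hz2⟩ := ih b w y (by omega)
      refine ⟨z, ?_, hz2⟩
      calc hammingDist x z ≤ hammingDist x w + hammingDist w z := hammingDist_triangle x w z
        _ ≤ a + 1 := by omega

lemma dp_real [DecidableEq 𝓧] {n : ℕ} (M : Kernel (Fin n → 𝓧) 𝓨) [IsMarkovKernel M]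
    {ε δ : ℝ} (hδ0 : 0 ≤ δ) (hDP : IsDP M ε δ) (x y : Fin n → 𝓧)
    (h : hammingDist x y ≤ 1) (S : Set 𝓨) (hS : MeasurableSet S) :
    (M x S).toReal ≤ Real.exp ε * (M y S).toReal + δ := by
  have h1 := hDP x y h S hS
  calc (M x S).toReal ≤ (ENNReal.ofReal (Real.exp ε) * M y S + ENNReal.ofReal δ).toReal := by
        refine ENNReal.toReal_mono ?_ h1
        refine ENNReal.add_ne_top.2 ⟨?_, ENNReal.ofReal_ne_top⟩
        exact ENNReal.mul_ne_top ENNReal.ofReal_ne_top (measure_ne_top _ _)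
    _ = Real.exp ε * (M y S).toReal + δ := by
        rw [ENNReal.toReal_add (ENNReal.mul_ne_top ENNReal.ofReal_ne_top (measure_ne_top _ _))
          ENNReal.ofReal_ne_top, ENNReal.toReal_mul,
          ENNReal.toReal_ofReal (Real.exp_pos _).le, ENNReal.toReal_ofReal hδ0]

lemma group_priv [DecidableEq 𝓧] {n : ℕ} (M : Kernel (Fin n → 𝓧) 𝓨) [IsMarkovKernel M]
    {ε δ : ℝ} (hε : 0 < ε) (hδ0 : 0 ≤ δ) (hDP : IsDP M ε δ)
    (S : Set 𝓨) (hS : MeasurableSet S) :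
    ∀ (m : ℕ) (x y : Fin n → 𝓧), hammingDist x y ≤ m →
      (M x S).toReal ≤ Real.exp (m * ε) * (M y S).toReal
        + m * δ * Real.exp (m * ε) * Real.exp (-ε) := by
  intro m
  induction m with
  | zero =>
    intro x y h
    have : x = y := hammingDist_eq_zero.1 (Nat.le_zero.1 h)
    subst this
    simp
  | succ m ih =>
    intro x y h
    obtain ⟨z, hz1, hz2⟩ := ham_split 1 m x y (by omega)
    have h1 := dp_real M hδ0 hDP x z hz1 S hS
    have h2 := ih z y hz2
    have hE : Real.exp (((m + 1 : ℕ) : ℝ) * ε) = Real.exp ((m : ℝ) * ε) * Real.exp ε := by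
      rw [← Real.exp_add]; push_cast; ring_nf
    have hinv : Real.exp ε * Real.exp (-ε) = 1 := by
      rw [← Real.exp_add]; simp
    have hone : (1 : ℝ) ≤ Real.exp ((m : ℝ) * ε) :=
      Real.one_le_exp (by positivity)
    have hpy : 0 ≤ (M y S).toReal := ENNReal.toReal_nonneg
    have hep : 0 < Real.exp ε := Real.exp_pos _
    have hepm : 0 < Real.exp ((m : ℝ) * ε) := Real.exp_pos _
    rw [hE]
    have key := add_le_add_left (mul_le_mul_of_nonneg_left h2 hep.le) δ
    have h3 : ((M x) S).toReal ≤ Real.exp ε * (Real.exp ((m:ℝ) * ε) * (M y S).toReal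
        + (m:ℝ) * δ * Real.exp ((m:ℝ) * ε) * Real.exp (-ε)) + δ := h1.trans key
    have h4 : Real.exp ε * (Real.exp ((m:ℝ) * ε) * (M y S).toReal
        + (m:ℝ) * δ * Real.exp ((m:ℝ) * ε) * Real.exp (-ε)) + δ
        = Real.exp ((m:ℝ) * ε) * Real.exp ε * (M y S).toReal
          + (m:ℝ) * δ * Real.exp ((m:ℝ) * ε) * (Real.exp ε * Real.exp (-ε)) + δ := by ring
    rw [h4, hinv, mul_one] at h3
    have h5 : Real.exp ((m:ℝ) * ε) * Real.exp ε * (M y S).toReal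
          + (m:ℝ) * δ * Real.exp ((m:ℝ) * ε) + δ
        ≤ Real.exp ((m:ℝ) * ε) * Real.exp ε * (M y S).toReal
          + ((m:ℕ) + 1 : ℕ) * δ * (Real.exp ((m:ℝ) * ε) * Real.exp ε) * Real.exp (-ε) := by
      push_cast
      have : (((m:ℝ) + 1) * δ * (Real.exp ((m:ℝ) * ε) * Real.exp ε) * Real.exp (-ε))
          = ((m:ℝ) + 1) * δ * Real.exp ((m:ℝ) * ε) * (Real.exp ε * Real.exp (-ε)) := by ring
      rw [this, hinv, mul_one]
      nlinarith [mul_le_mul_of_nonneg_left hone hδ0]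
    have := h3.trans h5
    push_cast at this ⊢
    linarith

/-- **`(ε, δ)`-DP Le Cam matching**: if `M` is `(ε, δ)`-DP and `Ψ` is a binary test, then for
any two datasets `X₁, X₂`,
`(1/2)(P(Ψ(M(X₁)) ≠ 1) + P(Ψ(M(X₂)) ≠ 2))
  ≥ (1/2) e^{-ε ⌈d_H(X₁,X₂)/2⌉} - e^{-ε} δ ⌈d_H(X₁,X₂)/2⌉`. -/
theorem dp_lecam_matching [DecidableEq 𝓧] {n : ℕ}
    (M : Kernel (Fin n → 𝓧) 𝓨) [IsMarkovKernel M]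
    (ε δ : ℝ) (hε : 0 < ε) (hδ0 : 0 ≤ δ) (hδ1 : δ < 1) (hDP : IsDP M ε δ)
    (Ψ : 𝓨 → Fin 2) (hΨ : Measurable Ψ) (X₁ X₂ : Fin n → 𝓧) :
    (1 / 2 : ℝ) * Real.exp (-ε * (⌈(hammingDist X₁ X₂ : ℝ) / 2⌉₊ : ℝ))
      - Real.exp (-ε) * δ * (⌈(hammingDist X₁ X₂ : ℝ) / 2⌉₊ : ℝ)
    ≤ (1 / 2 : ℝ) * ((M X₁ {y | Ψ y ≠ 0}).toReal + (M X₂ {y | Ψ y ≠ 1}).toReal) := by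
  set d : ℕ := hammingDist X₁ X₂ with hd
  set k : ℕ := ⌈(d : ℝ) / 2⌉₊ with hk
  have hdk : d ≤ k + k := by
    have h1 : ((d : ℝ) / 2) ≤ (k : ℝ) := Nat.le_ceil _
    have h2 : (d : ℝ) ≤ (k : ℝ) + (k : ℝ) := by linarith
    exact_mod_cast h2
  obtain ⟨z, hz1, hz2⟩ := ham_split k k X₁ X₂ hdk
  set S : Set 𝓨 := Ψ ⁻¹' {1} with hSdef
  have hS : MeasurableSet S := hΨ (measurableSet_singleton 1)
  have hset1 : {y | Ψ y ≠ 0} = S := by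
    ext y
    simp only [Set.mem_setOf_eq, hSdef, Set.mem_preimage, Set.mem_singleton_iff, Ne,
      Fin.ext_iff, Fin.val_zero, Fin.val_one]
    have := (Ψ y).isLt
    omega
  have hset2 : {y | Ψ y ≠ 1} = Sᶜ := rfl
  rw [hset1, hset2]
  have hz1' : hammingDist z X₁ ≤ k := by rwa [hammingDist_comm]
  have g1 := group_priv M hε hδ0 hDP S hS k z X₁ hz1'
  have g2 := group_priv M hε hδ0 hDP Sᶜ hS.compl k z X₂ hz2
  have hone : (M z S).toReal + (M z Sᶜ).toReal = 1 := by
    have h := measure_add_measure_compl (μ := M z) hS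
    rw [measure_univ] at h
    have := congrArg ENNReal.toReal h
    rwa [ENNReal.toReal_add (measure_ne_top _ _) (measure_ne_top _ _), ENNReal.toReal_one] at this
  set p1 : ℝ := (M X₁ S).toReal with hp1
  set p2 : ℝ := (M X₂ Sᶜ).toReal with hp2
  set E : ℝ := Real.exp ((k : ℝ) * ε) with hE
  set c : ℝ := Real.exp (-ε * (k : ℝ)) with hc
  have hcE : c * E = 1 := by
    rw [hc, hE, ← Real.exp_add]
    have : -ε * (k : ℝ) + (k : ℝ) * ε = 0 := by ring
    rw [this, Real.exp_zero]
  have hbig : 1 ≤ E * (p1 + p2) + 2 * (k : ℝ) * δ * E * Real.exp (-ε) := by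
    rw [← hone]
    have := add_le_add g1 g2
    nlinarith [this]
  have hcpos : (0 : ℝ) < c := Real.exp_pos _
  have h6 : c * (E * (p1 + p2) + 2 * (k : ℝ) * δ * E * Real.exp (-ε))
      = (p1 + p2) + 2 * (k : ℝ) * δ * Real.exp (-ε) := by
    have h7 : c * (E * (p1 + p2) + 2 * (k : ℝ) * δ * E * Real.exp (-ε))
        = (c * E) * (p1 + p2) + 2 * (k : ℝ) * δ * (c * E) * Real.exp (-ε) := by ring
    rw [h7, hcE]; ring
  have h8 : c ≤ (p1 + p2) + 2 * (k : ℝ) * δ * Real.exp (-ε) := by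
    have := mul_le_mul_of_nonneg_left hbig hcpos.le
    rw [mul_one, h6] at this
    exact this
  linarith
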